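/- Let p be an odd prime, and P, Q integers with D = P^2 - 4Q such that (D/p) = -1. Then V_{p+1} ≡ 2Q (mod p), where V is the Lucas V-sequence with parameters P, Q. -/

import Mathlib

def lucasU (P Q : ℤ) : ℕ → ℤ
  | 0 => 0
  | 1 => 1
  | k + 2 => P * lucasU P Q (k + 1) - Q * lucasU P Q k

def lucasV (P Q : ℤ) : ℕ → ℤ
  | 0 => 2
  | 1 => P
  | k + 2 => P * lucasV P Q (k + 1) - Q * lucasV P Q k

theorem stmt_4 (p : ℕ) (hp : p.Prime) (hodd : Odd p) [Fact p.Prime] (P Q : ℤ)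
    (hD : legendreSym p (P ^ 2 - 4 * Q) = -1) :
    lucasV P Q (p + 1) ≡ 2 * Q [ZMOD p] := by
  classical
  set d : ZMod p := ((P ^ 2 - 4 * Q : ℤ) : ZMod p) with hd
  set f : Polynomial (ZMod p) := Polynomial.X ^ 2 - Polynomial.C d with hf
  have hdeg : f.degree ≠ 0 := by
    rw [hf, Polynomial.degree_X_pow_sub_C (by norm_num)]
    norm_num
  have hinj : Function.Injective (AdjoinRoot.of f) :=
    AdjoinRoot.of.injective_of_degree_ne_zero hdeg
  letI : CharP (AdjoinRoot f) p := charP_of_injective_ringHom hinj p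
  set A := AdjoinRoot f
  set θ : A := AdjoinRoot.root f with hθ
  have hθ2 : θ ^ 2 = AdjoinRoot.of f d := by
    have h : Polynomial.eval₂ (AdjoinRoot.of f) θ (Polynomial.X ^ 2 - Polynomial.C d) = 0 := by
      rw [← hf]
      exact AdjoinRoot.eval₂_root f
    rw [Polynomial.eval₂_sub, Polynomial.eval₂_pow, Polynomial.eval₂_X, Polynomial.eval₂_C,
      sub_eq_zero] at h
    exact h
  have hofd : AdjoinRoot.of f d = ((P ^ 2 - 4 * Q : ℤ) : A) := by
    rw [hd, map_intCast]
  set x : A := (P : A) + θ with hx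
  set y : A := (P : A) - θ with hy
  have hxy : x * y = ((4 * Q : ℤ) : A) := by
    rw [hx, hy]
    have : ((P : A) + θ) * ((P : A) - θ) = (P : A) ^ 2 - θ ^ 2 := by ring
    rw [this, hθ2, hofd]
    push_cast
    ring
  have hsum : x + y = ((2 * P : ℤ) : A) := by
    rw [hx, hy]; push_cast; ring
  have key : ∀ n, x ^ n + y ^ n = ((2 ^ n * lucasV P Q n : ℤ) : A) := by
    intro n
    induction n using Nat.twoStepInduction with
    | zero => simp [lucasV]; norm_num
    | one => simpa [lucasV] using hsum
    | more n ih2 ih1 =>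
      have : x ^ (n + 2) + y ^ (n + 2)
          = (x + y) * (x ^ (n + 1) + y ^ (n + 1)) - x * y * (x ^ n + y ^ n) := by
        ring
      rw [this, ih1, ih2, hsum, hxy, show lucasV P Q (n + 2) = P * lucasV P Q (n + 1) - Q * lucasV P Q n from rfl]
      simp only [A] at *
      push_cast
      ring
  -- Frobenius
  have hp1 : p % 2 = 1 := Nat.odd_iff.mp hodd
  have hp2 : p = 2 * (p / 2) + 1 := by omega
  have heuler : d ^ (p / 2) = -1 := by
    have h := legendreSym.eq_pow p (P ^ 2 - 4 * Q)
    rw [hD] at h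
    rw [hd]
    exact_mod_cast h.symm
  have hθp : θ ^ p = -θ := by
    have h : θ ^ p = θ ^ (2 * (p / 2) + 1) := by congr 1
    rw [h, pow_succ, pow_mul, hθ2, ← map_pow, heuler]
    simp
    exact neg_one_mul θ
  have hPp : (P : A) ^ p = (P : A) := by
    have h1 : ((P : ZMod p)) ^ p = (P : ZMod p) := ZMod.pow_card _
    have h2 : (P : A) = AdjoinRoot.of f ((P : ZMod p)) := by rw [map_intCast]
    rw [h2, ← map_pow, h1]
  have hxp : x ^ p = y := by
    rw [hx, hy, add_pow_char, hθp, hPp]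
    ring
  have hyp : y ^ p = x := by
    have : y = (P : A) + (-θ) := by rw [hy]; ring
    rw [this, add_pow_char, hPp, hx]
    have hodd' : Odd p := hodd
    rw [hodd'.neg_pow, hθp]
    ring
  have hfinal : x ^ (p + 1) + y ^ (p + 1) = ((8 * Q : ℤ) : A) := by
    rw [pow_succ, pow_succ, hxp, hyp]
    have : y * x + x * y = 2 * (x * y) := by ring
    rw [this, hxy]
    push_cast
    ring
  rw [key (p + 1)] at hfinal
  have hz : ((2 ^ (p + 1) * lucasV P Q (p + 1) : ℤ) : ZMod p) = ((8 * Q : ℤ) : ZMod p) := by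
    apply hinj
    rw [map_intCast, map_intCast]
    exact hfinal
  -- reduce
  have h2p : (2 : ZMod p) ^ p = 2 := ZMod.pow_card 2
  have hp3 : 3 ≤ p := by have := hp.two_le; omega
  have h4 : (4 : ZMod p) ≠ 0 := by
    have h2 : (2 : ZMod p) ≠ 0 := by
      intro h
      have h' : ((2 : ℕ) : ZMod p) = 0 := by exact_mod_cast h
      rw [ZMod.natCast_eq_zero_iff] at h'
      have := Nat.le_of_dvd (by norm_num) h'
      omega
    have h44 : (4 : ZMod p) = 2 * 2 := by norm_num
    rw [h44]
    exact mul_ne_zero h2 h2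
  rw [← ZMod.intCast_eq_intCast_iff]
  push_cast at hz ⊢
  rw [pow_succ, h2p] at hz
  have h4V : (4 : ZMod p) * (lucasV P Q (p + 1) : ZMod p) = 4 * (2 * (Q : ZMod p)) := by
    linear_combination hz
  exact mul_left_cancel₀ h4 h4V
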